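/- Let m ≠ 0 and suppose d ≠ p − 1/2 for every p ∈ ℤ≥0. Then the Verma module V^d over s(1/1) is irreducible. -/

import Mathlib

/-- The `N = 1` super Schrödinger algebra 𝔰(1/1) represented on a complex vector space
`V`, together with the lowest weight (Verma) structure of conformal weight `d` and mass
`m`.  The even generators are `H, P, G, D, K, M` (satisfying the sch(1) relations, `M`
central), the odd generators are `Q, S, X`, and `Chi` is the action of the odd scalar χ
(`χ² = m/2`, `X v₀ = χ v₀`).  Relations between generators not listed below vanish.
The Verma module `V^d` has (super) basis `{G^k K^ℓ v₀, G^k K^ℓ S v₀}` over the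
coefficient superalgebra `ℂ[χ]`, i.e. the ℂ-basis `{G^k K^ℓ S^a χ^c v₀}`. -/
structure SSch1Verma (d m : ℂ) (V : Type*) [AddCommGroup V] [Module ℂ V] where
  H : Module.End ℂ V
  P : Module.End ℂ V
  G : Module.End ℂ V
  D : Module.End ℂ V
  K : Module.End ℂ V
  M : Module.End ℂ V
  Q : Module.End ℂ V
  S : Module.End ℂ V
  X : Module.End ℂ V
  Chi : Module.End ℂ V
  -- nonvanishing even-even commutators
  rel_HD : H * D - D * H = (2 : ℂ) • H
  rel_HK : H * K - K * H = D
  rel_DK : D * K - K * D = (2 : ℂ) • K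
  rel_PG : P * G - G * P = M
  rel_HG : H * G - G * H = P
  rel_DG : D * G - G * D = G
  rel_PD : P * D - D * P = P
  rel_PK : P * K - K * P = G
  -- vanishing even-even commutators
  rel_HP : H * P = P * H
  rel_HM : H * M = M * H
  rel_PM : P * M = M * P
  rel_GK : G * K = K * G
  rel_GM : G * M = M * G
  rel_DM : D * M = M * D
  rel_KM : K * M = M * K
  -- nonvanishing even-odd commutators
  rel_QD : Q * D - D * Q = Q
  rel_QK : Q * K - K * Q = S
  rel_DS : D * S - S * D = S
  rel_HS : H * S - S * H = Q
  rel_QG : Q * G - G * Q = X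
  rel_PS : P * S - S * P = X
  -- vanishing even-odd commutators
  rel_QH : Q * H = H * Q
  rel_QP : Q * P = P * Q
  rel_QM : Q * M = M * Q
  rel_SG : S * G = G * S
  rel_SK : S * K = K * S
  rel_SM : S * M = M * S
  rel_XH : X * H = H * X
  rel_XP : X * P = P * X
  rel_XG : X * G = G * X
  rel_XD : X * D = D * X
  rel_XK : X * K = K * X
  rel_XM : X * M = M * X
  -- odd-odd anticommutators
  rel_QQ : Q * Q + Q * Q = -((2 : ℂ) • H)
  rel_SS : S * S + S * S = -((2 : ℂ) • K)
  rel_XX : X * X + X * X = -M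
  rel_QX : Q * X + X * Q = -P
  rel_SX : S * X + X * S = -G
  rel_QS : Q * S + S * Q = -D
  -- χ is an odd scalar: it commutes with the even generators, anticommutes with the
  -- odd generators and satisfies χ² = m/2
  chi_H : Chi * H = H * Chi
  chi_P : Chi * P = P * Chi
  chi_G : Chi * G = G * Chi
  chi_D : Chi * D = D * Chi
  chi_K : Chi * K = K * Chi
  chi_M : Chi * M = M * Chi
  chi_Q : Chi * Q = -(Q * Chi)
  chi_S : Chi * S = -(S * Chi)
  chi_X : Chi * X = -(X * Chi)
  chi_sq : Chi * Chi = (m / 2) • (1 : Module.End ℂ V)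
  -- the lowest weight vector
  v0 : V
  lw_Q : Q v0 = 0
  lw_P : P v0 = 0
  lw_D : D v0 = (-d) • v0
  lw_M : M v0 = m • v0
  lw_X : X v0 = Chi v0
  -- PBW basis of the Verma module
  pbw_indep : LinearIndependent ℂ (fun i : ℕ × ℕ × Bool × Bool =>
    (G ^ i.1 * K ^ i.2.1 * (if i.2.2.1 then S else 1) * (if i.2.2.2 then Chi else 1)) v0)
  pbw_span : Submodule.span ℂ (Set.range (fun i : ℕ × ℕ × Bool × Bool =>
    (G ^ i.1 * K ^ i.2.1 * (if i.2.2.1 then S else 1) * (if i.2.2.2 then Chi else 1)) v0)) = ⊤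

namespace SSch1Verma

variable {d m : ℂ} {V : Type*} [AddCommGroup V] [Module ℂ V]

/-- A singular vector of the Verma module: homogeneous with respect to the `D`-grading
(i.e. a `D`-eigenvector), not a scalar multiple of the lowest weight vector `v₀`
(scalars being the coefficient superalgebra `ℂ[χ]`), and annihilated by `Q` and `P`. -/
def IsSingular (ρ : SSch1Verma d m V) (v : V) : Prop :=
  (∃ n : ℂ, ρ.D v = n • v) ∧
  (∀ a b : ℂ, v ≠ a • ρ.v0 + b • ρ.Chi ρ.v0) ∧
  ρ.Q v = 0 ∧ ρ.P v = 0

/-- A subspace invariant under the action of 𝔰(1/1) (and under the odd scalar χ). -/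
def Invariant (ρ : SSch1Verma d m V) (W : Submodule ℂ V) : Prop :=
  ∀ w ∈ W, ρ.H w ∈ W ∧ ρ.P w ∈ W ∧ ρ.G w ∈ W ∧ ρ.D w ∈ W ∧ ρ.K w ∈ W ∧
    ρ.M w ∈ W ∧ ρ.Q w ∈ W ∧ ρ.S w ∈ W ∧ ρ.X w ∈ W ∧ ρ.Chi w ∈ W

/-- The submodule generated by a set of vectors: the smallest invariant subspace
containing it. -/
def gen (ρ : SSch1Verma d m V) (s : Set V) : Submodule ℂ V :=
  sInf {W | ρ.Invariant W ∧ s ⊆ W}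

/-- A singular vector of the factor module `V/J`, expressed in terms of representatives:
homogeneous with respect to the induced `D`-grading, not a scalar multiple of the image
of the lowest weight vector, and annihilated by the induced actions of `Q` and `P`. -/
def IsSingularMod (ρ : SSch1Verma d m V) (J : Submodule ℂ V) (v : V) : Prop :=
  (∃ n : ℂ, ρ.D v - n • v ∈ J) ∧
  (∀ a b : ℂ, v - (a • ρ.v0 + b • ρ.Chi ρ.v0) ∉ J) ∧
  ρ.Q v ∈ J ∧ ρ.P v ∈ J

end SSch1Verma

namespace SSch1Verma

variable {d m : ℂ} {V : Type*} [AddCommGroup V] [Module ℂ V] (ρ : SSch1Verma d m V)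

/-- abbreviation for the index type of the PBW basis -/
abbrev Idx := ℕ × ℕ × Bool × Bool

/-- the PBW basis function -/
noncomputable def bfun : Idx → V := fun i =>
  (ρ.G ^ i.1 * ρ.K ^ i.2.1 * (if i.2.2.1 then ρ.S else 1) * (if i.2.2.2 then ρ.Chi else 1)) ρ.v0

/-- the PBW basis -/
noncomputable def bas : Module.Basis Idx ℂ V := Module.Basis.mk ρ.pbw_indep ρ.pbw_span.ge

lemma bas_apply (i : Idx) : ρ.bas i = ρ.bfun i := Module.Basis.mk_apply _ _ _

lemma bfun_ff_ff (k ℓ : ℕ) : ρ.bfun (k, ℓ, false, false) = (ρ.G ^ k) ((ρ.K ^ ℓ) ρ.v0) := by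
  simp [bfun, Module.End.mul_apply]

lemma bfun_ff_tt (k ℓ : ℕ) :
    ρ.bfun (k, ℓ, false, true) = (ρ.G ^ k) ((ρ.K ^ ℓ) (ρ.Chi ρ.v0)) := by
  simp [bfun, Module.End.mul_apply]

lemma bfun_tt_ff (k ℓ : ℕ) :
    ρ.bfun (k, ℓ, true, false) = (ρ.G ^ k) ((ρ.K ^ ℓ) (ρ.S ρ.v0)) := by
  simp [bfun, Module.End.mul_apply]

lemma bfun_tt_tt (k ℓ : ℕ) :
    ρ.bfun (k, ℓ, true, true) = (ρ.G ^ k) ((ρ.K ^ ℓ) (ρ.S (ρ.Chi ρ.v0))) := by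
  simp [bfun, Module.End.mul_apply]

/-! ### commutator identities applied to vectors -/

section ops

-- basic two-operator facts as vector identities
lemma opQG (x : V) : ρ.Q (ρ.G x) = ρ.G (ρ.Q x) + ρ.X x := by
  have := congrArg (fun f : Module.End ℂ V => f x) ρ.rel_QG
  simp only [LinearMap.sub_apply, Module.End.mul_apply] at this
  linear_combination (norm := module) this

lemma opQK (x : V) : ρ.Q (ρ.K x) = ρ.K (ρ.Q x) + ρ.S x := by
  have := congrArg (fun f : Module.End ℂ V => f x) ρ.rel_QK
  simp only [LinearMap.sub_apply, Module.End.mul_apply] at this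
  linear_combination (norm := module) this

lemma opPG (x : V) : ρ.P (ρ.G x) = ρ.G (ρ.P x) + ρ.M x := by
  have := congrArg (fun f : Module.End ℂ V => f x) ρ.rel_PG
  simp only [LinearMap.sub_apply, Module.End.mul_apply] at this
  linear_combination (norm := module) this

lemma opPK (x : V) : ρ.P (ρ.K x) = ρ.K (ρ.P x) + ρ.G x := by
  have := congrArg (fun f : Module.End ℂ V => f x) ρ.rel_PK
  simp only [LinearMap.sub_apply, Module.End.mul_apply] at this
  linear_combination (norm := module) this

lemma opXG (x : V) : ρ.X (ρ.G x) = ρ.G (ρ.X x) := by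
  have := congrArg (fun f : Module.End ℂ V => f x) ρ.rel_XG
  simpa [Module.End.mul_apply] using this

lemma opXK (x : V) : ρ.X (ρ.K x) = ρ.K (ρ.X x) := by
  have := congrArg (fun f : Module.End ℂ V => f x) ρ.rel_XK
  simpa [Module.End.mul_apply] using this

lemma opSK (x : V) : ρ.S (ρ.K x) = ρ.K (ρ.S x) := by
  have := congrArg (fun f : Module.End ℂ V => f x) ρ.rel_SK
  simpa [Module.End.mul_apply] using this

lemma opMG (x : V) : ρ.M (ρ.G x) = ρ.G (ρ.M x) := by
  have := congrArg (fun f : Module.End ℂ V => f x) ρ.rel_GM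
  simpa [Module.End.mul_apply] using this.symm

lemma opMK (x : V) : ρ.M (ρ.K x) = ρ.K (ρ.M x) := by
  have := congrArg (fun f : Module.End ℂ V => f x) ρ.rel_KM
  simpa [Module.End.mul_apply] using this.symm

lemma opGK (x : V) : ρ.G (ρ.K x) = ρ.K (ρ.G x) := by
  have := congrArg (fun f : Module.End ℂ V => f x) ρ.rel_GK
  simpa [Module.End.mul_apply] using this

lemma opMS (x : V) : ρ.M (ρ.S x) = ρ.S (ρ.M x) := by
  have := congrArg (fun f : Module.End ℂ V => f x) ρ.rel_SM
  simpa [Module.End.mul_apply] using this.symm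

lemma opMChi (x : V) : ρ.M (ρ.Chi x) = ρ.Chi (ρ.M x) := by
  have := congrArg (fun f : Module.End ℂ V => f x) ρ.chi_M
  simpa [Module.End.mul_apply] using this.symm

lemma opQChi (x : V) : ρ.Q (ρ.Chi x) = -ρ.Chi (ρ.Q x) := by
  have := congrArg (fun f : Module.End ℂ V => f x) ρ.chi_Q
  have h : ρ.Chi (ρ.Q x) = -(ρ.Q (ρ.Chi x)) := by
    simpa [Module.End.mul_apply] using this
  rw [h, neg_neg]

lemma opPChi (x : V) : ρ.P (ρ.Chi x) = ρ.Chi (ρ.P x) := by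
  have := congrArg (fun f : Module.End ℂ V => f x) ρ.chi_P
  simpa [Module.End.mul_apply] using this.symm

lemma opXChi (x : V) : ρ.X (ρ.Chi x) = -ρ.Chi (ρ.X x) := by
  have := congrArg (fun f : Module.End ℂ V => f x) ρ.chi_X
  have h : ρ.Chi (ρ.X x) = -(ρ.X (ρ.Chi x)) := by
    simpa [Module.End.mul_apply] using this
  rw [h, neg_neg]

lemma opDChi (x : V) : ρ.D (ρ.Chi x) = ρ.Chi (ρ.D x) := by
  have := congrArg (fun f : Module.End ℂ V => f x) ρ.chi_D
  simpa [Module.End.mul_apply] using this.symm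

lemma opQS (x : V) : ρ.Q (ρ.S x) = -ρ.S (ρ.Q x) - ρ.D x := by
  have := congrArg (fun f : Module.End ℂ V => f x) ρ.rel_QS
  simp only [LinearMap.add_apply, Module.End.mul_apply, LinearMap.neg_apply] at this
  linear_combination (norm := module) this

lemma opPS (x : V) : ρ.P (ρ.S x) = ρ.S (ρ.P x) + ρ.X x := by
  have := congrArg (fun f : Module.End ℂ V => f x) ρ.rel_PS
  simp only [LinearMap.sub_apply, Module.End.mul_apply] at this
  linear_combination (norm := module) this

lemma opXS (x : V) : ρ.X (ρ.S x) = -ρ.S (ρ.X x) - ρ.G x := by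
  have := congrArg (fun f : Module.End ℂ V => f x) ρ.rel_SX
  simp only [LinearMap.add_apply, Module.End.mul_apply, LinearMap.neg_apply] at this
  linear_combination (norm := module) this

lemma opSS (x : V) : ρ.S (ρ.S x) = -ρ.K x := by
  have := congrArg (fun f : Module.End ℂ V => f x) ρ.rel_SS
  simp only [LinearMap.add_apply, Module.End.mul_apply, LinearMap.neg_apply,
    LinearMap.smul_apply] at this
  linear_combination (norm := module) (1/2 : ℂ) • this

lemma opChiChi (x : V) : ρ.Chi (ρ.Chi x) = (m / 2) • x := by
  have := congrArg (fun f : Module.End ℂ V => f x) ρ.chi_sq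
  simpa [Module.End.mul_apply] using this

end ops

end SSch1Verma
namespace SSch1Verma

variable {d m : ℂ} {V : Type*} [AddCommGroup V] [Module ℂ V] (ρ : SSch1Verma d m V)

/-! ### power commutation lemmas -/

lemma pow_apply_succ (f : Module.End ℂ V) (n : ℕ) (x : V) :
    (f ^ (n+1)) x = (f ^ n) (f x) := by rw [pow_succ, Module.End.mul_apply]

lemma Q_Gpow (k : ℕ) (x : V) :
    ρ.Q ((ρ.G ^ (k+1)) x) = (ρ.G ^ (k+1)) (ρ.Q x) + ((k : ℂ) + 1) • ((ρ.G ^ k) (ρ.X x)) := by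
  induction k generalizing x with
  | zero => simp [ρ.opQG x]
  | succ k ih =>
    rw [pow_apply_succ ρ.G (k+1) x, ih (ρ.G x), ρ.opQG x, ρ.opXG x, map_add]
    rw [← pow_apply_succ ρ.G (k+1) (ρ.Q x), ← pow_apply_succ ρ.G k (ρ.X x)]
    push_cast
    module

lemma Q_Kpow (ℓ : ℕ) (x : V) :
    ρ.Q ((ρ.K ^ (ℓ+1)) x) = (ρ.K ^ (ℓ+1)) (ρ.Q x) + ((ℓ : ℂ) + 1) • ((ρ.K ^ ℓ) (ρ.S x)) := by
  induction ℓ generalizing x with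
  | zero => simp [ρ.opQK x]
  | succ ℓ ih =>
    rw [pow_apply_succ ρ.K (ℓ+1) x, ih (ρ.K x), ρ.opQK x, ρ.opSK x, map_add]
    rw [← pow_apply_succ ρ.K (ℓ+1) (ρ.Q x), ← pow_apply_succ ρ.K ℓ (ρ.S x)]
    push_cast
    module

lemma P_Gpow (k : ℕ) (x : V) :
    ρ.P ((ρ.G ^ (k+1)) x) = (ρ.G ^ (k+1)) (ρ.P x) + ((k : ℂ) + 1) • ((ρ.G ^ k) (ρ.M x)) := by
  induction k generalizing x with
  | zero => simp [ρ.opPG x]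
  | succ k ih =>
    rw [pow_apply_succ ρ.G (k+1) x, ih (ρ.G x), ρ.opPG x, ρ.opMG x, map_add]
    rw [← pow_apply_succ ρ.G (k+1) (ρ.P x), ← pow_apply_succ ρ.G k (ρ.M x)]
    push_cast
    module

lemma G_Kpow (ℓ : ℕ) (x : V) : (ρ.K ^ ℓ) (ρ.G x) = ρ.G ((ρ.K ^ ℓ) x) := by
  induction ℓ generalizing x with
  | zero => simp
  | succ ℓ ih =>
    rw [pow_apply_succ ρ.K ℓ (ρ.G x), ← ρ.opGK x, ih (ρ.K x), ← pow_apply_succ ρ.K ℓ x]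

lemma P_Kpow (ℓ : ℕ) (x : V) :
    ρ.P ((ρ.K ^ (ℓ+1)) x) = (ρ.K ^ (ℓ+1)) (ρ.P x) + ((ℓ : ℂ) + 1) • (ρ.G ((ρ.K ^ ℓ) x)) := by
  induction ℓ generalizing x with
  | zero => simp [ρ.opPK x]
  | succ ℓ ih =>
    rw [pow_apply_succ ρ.K (ℓ+1) x, ih (ρ.K x), ρ.opPK x, map_add]
    rw [← pow_apply_succ ρ.K (ℓ+1) (ρ.P x), ← pow_apply_succ ρ.K ℓ x, ρ.G_Kpow (ℓ+1) x]
    push_cast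
    module

lemma X_Kpow (ℓ : ℕ) (x : V) : ρ.X ((ρ.K ^ ℓ) x) = (ρ.K ^ ℓ) (ρ.X x) := by
  induction ℓ generalizing x with
  | zero => simp
  | succ ℓ ih => rw [pow_succ, Module.End.mul_apply, ih (ρ.K x), ρ.opXK x, Module.End.mul_apply]

lemma M_Kpow (ℓ : ℕ) (x : V) : ρ.M ((ρ.K ^ ℓ) x) = (ρ.K ^ ℓ) (ρ.M x) := by
  induction ℓ generalizing x with
  | zero => simp
  | succ ℓ ih => rw [pow_succ, Module.End.mul_apply, ih (ρ.K x), ρ.opMK x, Module.End.mul_apply]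

/-! ### action on the generating vectors -/

lemma Q_u01 : ρ.Q (ρ.Chi ρ.v0) = 0 := by rw [ρ.opQChi, ρ.lw_Q, map_zero, neg_zero]

lemma Q_u10 : ρ.Q (ρ.S ρ.v0) = d • ρ.v0 := by
  rw [ρ.opQS, ρ.lw_Q, ρ.lw_D, map_zero, neg_zero, zero_sub, neg_smul, neg_neg]

lemma Q_u11 : ρ.Q (ρ.S (ρ.Chi ρ.v0)) = d • ρ.Chi ρ.v0 := by
  rw [ρ.opQS, ρ.Q_u01, ρ.opDChi, ρ.lw_D, map_zero, neg_zero, zero_sub, map_smul, neg_smul,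
    neg_neg]

lemma P_u01 : ρ.P (ρ.Chi ρ.v0) = 0 := by rw [ρ.opPChi, ρ.lw_P, map_zero]

lemma P_u10 : ρ.P (ρ.S ρ.v0) = ρ.Chi ρ.v0 := by
  rw [ρ.opPS, ρ.lw_P, ρ.lw_X, map_zero, zero_add]

lemma P_u11 : ρ.P (ρ.S (ρ.Chi ρ.v0)) = -((m/2) • ρ.v0) := by
  rw [ρ.opPS, ρ.P_u01, ρ.opXChi, ρ.lw_X, ρ.opChiChi, map_zero, zero_add]

lemma X_u01 : ρ.X (ρ.Chi ρ.v0) = -((m/2) • ρ.v0) := by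
  rw [ρ.opXChi, ρ.lw_X, ρ.opChiChi]

lemma X_u10 : ρ.X (ρ.S ρ.v0) = -ρ.S (ρ.Chi ρ.v0) - ρ.G ρ.v0 := by
  rw [ρ.opXS, ρ.lw_X]

lemma X_u11 : ρ.X (ρ.S (ρ.Chi ρ.v0)) = (m/2) • ρ.S ρ.v0 - ρ.G (ρ.Chi ρ.v0) := by
  rw [ρ.opXS, ρ.X_u01, map_neg, map_smul, neg_neg]

lemma M_u00 : ρ.M ρ.v0 = m • ρ.v0 := ρ.lw_M
lemma M_u01 : ρ.M (ρ.Chi ρ.v0) = m • ρ.Chi ρ.v0 := by rw [ρ.opMChi, ρ.lw_M, map_smul]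
lemma M_u10 : ρ.M (ρ.S ρ.v0) = m • ρ.S ρ.v0 := by rw [ρ.opMS, ρ.lw_M, map_smul]
lemma M_u11 : ρ.M (ρ.S (ρ.Chi ρ.v0)) = m • ρ.S (ρ.Chi ρ.v0) := by
  rw [ρ.opMS, ρ.opMChi, ρ.lw_M, map_smul, map_smul]

end SSch1Verma
namespace SSch1Verma

variable {d m : ℂ} {V : Type*} [AddCommGroup V] [Module ℂ V] (ρ : SSch1Verma d m V)

/-! ### actions on `K`-towers -/

lemma XK00 (ℓ : ℕ) : ρ.X ((ρ.K^ℓ) ρ.v0) = (ρ.K^ℓ) (ρ.Chi ρ.v0) := by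
  rw [ρ.X_Kpow, ρ.lw_X]

lemma XK01 (ℓ : ℕ) : ρ.X ((ρ.K^ℓ) (ρ.Chi ρ.v0)) = -((m/2) • (ρ.K^ℓ) ρ.v0) := by
  rw [ρ.X_Kpow, ρ.X_u01, map_neg, map_smul]

lemma XK10 (ℓ : ℕ) : ρ.X ((ρ.K^ℓ) (ρ.S ρ.v0))
    = -((ρ.K^ℓ) (ρ.S (ρ.Chi ρ.v0))) - ρ.G ((ρ.K^ℓ) ρ.v0) := by
  rw [ρ.X_Kpow, ρ.X_u10, map_sub, map_neg, ρ.G_Kpow]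

lemma XK11 (ℓ : ℕ) : ρ.X ((ρ.K^ℓ) (ρ.S (ρ.Chi ρ.v0)))
    = (m/2) • (ρ.K^ℓ) (ρ.S ρ.v0) - ρ.G ((ρ.K^ℓ) (ρ.Chi ρ.v0)) := by
  rw [ρ.X_Kpow, ρ.X_u11, map_sub, map_smul, ρ.G_Kpow]

lemma MK00 (ℓ : ℕ) : ρ.M ((ρ.K^ℓ) ρ.v0) = m • (ρ.K^ℓ) ρ.v0 := by
  rw [ρ.M_Kpow, ρ.M_u00, map_smul]

lemma MK01 (ℓ : ℕ) : ρ.M ((ρ.K^ℓ) (ρ.Chi ρ.v0)) = m • (ρ.K^ℓ) (ρ.Chi ρ.v0) := by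
  rw [ρ.M_Kpow, ρ.M_u01, map_smul]

lemma MK10 (ℓ : ℕ) : ρ.M ((ρ.K^ℓ) (ρ.S ρ.v0)) = m • (ρ.K^ℓ) (ρ.S ρ.v0) := by
  rw [ρ.M_Kpow, ρ.M_u10, map_smul]

lemma MK11 (ℓ : ℕ) : ρ.M ((ρ.K^ℓ) (ρ.S (ρ.Chi ρ.v0))) = m • (ρ.K^ℓ) (ρ.S (ρ.Chi ρ.v0)) := by
  rw [ρ.M_Kpow, ρ.M_u11, map_smul]

lemma QK00 (ℓ : ℕ) : ρ.Q ((ρ.K^ℓ) ρ.v0) = (ℓ:ℂ) • ((ρ.K^(ℓ-1)) (ρ.S ρ.v0)) := by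
  cases ℓ with
  | zero => simp [ρ.lw_Q]
  | succ ℓ =>
    rw [ρ.Q_Kpow, ρ.lw_Q, map_zero, zero_add, Nat.succ_sub_one]
    push_cast
    rfl

lemma QK01 (ℓ : ℕ) :
    ρ.Q ((ρ.K^ℓ) (ρ.Chi ρ.v0)) = (ℓ:ℂ) • ((ρ.K^(ℓ-1)) (ρ.S (ρ.Chi ρ.v0))) := by
  cases ℓ with
  | zero => simp [ρ.Q_u01]
  | succ ℓ =>
    rw [ρ.Q_Kpow, ρ.Q_u01, map_zero, zero_add, Nat.succ_sub_one]
    push_cast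
    rfl

lemma QK10 (ℓ : ℕ) : ρ.Q ((ρ.K^ℓ) (ρ.S ρ.v0)) = (d - ℓ) • ((ρ.K^ℓ) ρ.v0) := by
  cases ℓ with
  | zero => simp [ρ.Q_u10]
  | succ ℓ =>
    rw [ρ.Q_Kpow, ρ.Q_u10, ρ.opSS, map_smul, map_neg, ← pow_apply_succ]
    push_cast
    module

lemma QK11 (ℓ : ℕ) :
    ρ.Q ((ρ.K^ℓ) (ρ.S (ρ.Chi ρ.v0))) = (d - ℓ) • ((ρ.K^ℓ) (ρ.Chi ρ.v0)) := by
  cases ℓ with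
  | zero => simp [ρ.Q_u11]
  | succ ℓ =>
    rw [ρ.Q_Kpow, ρ.Q_u11, ρ.opSS, map_smul, map_neg, ← pow_apply_succ]
    push_cast
    module

lemma PK00 (ℓ : ℕ) : ρ.P ((ρ.K^ℓ) ρ.v0) = (ℓ:ℂ) • ρ.G ((ρ.K^(ℓ-1)) ρ.v0) := by
  cases ℓ with
  | zero => simp [ρ.lw_P]
  | succ ℓ =>
    rw [ρ.P_Kpow, ρ.lw_P, map_zero, zero_add, Nat.succ_sub_one]
    push_cast
    rfl

lemma PK01 (ℓ : ℕ) :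
    ρ.P ((ρ.K^ℓ) (ρ.Chi ρ.v0)) = (ℓ:ℂ) • ρ.G ((ρ.K^(ℓ-1)) (ρ.Chi ρ.v0)) := by
  cases ℓ with
  | zero => simp [ρ.P_u01]
  | succ ℓ =>
    rw [ρ.P_Kpow, ρ.P_u01, map_zero, zero_add, Nat.succ_sub_one]
    push_cast
    rfl

lemma PK10 (ℓ : ℕ) : ρ.P ((ρ.K^ℓ) (ρ.S ρ.v0))
    = (ℓ:ℂ) • ρ.G ((ρ.K^(ℓ-1)) (ρ.S ρ.v0)) + (ρ.K^ℓ) (ρ.Chi ρ.v0) := by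
  cases ℓ with
  | zero => simp [ρ.P_u10]
  | succ ℓ =>
    rw [ρ.P_Kpow, ρ.P_u10, Nat.succ_sub_one]
    push_cast
    module

lemma PK11 (ℓ : ℕ) : ρ.P ((ρ.K^ℓ) (ρ.S (ρ.Chi ρ.v0)))
    = (ℓ:ℂ) • ρ.G ((ρ.K^(ℓ-1)) (ρ.S (ρ.Chi ρ.v0))) - (m/2) • (ρ.K^ℓ) ρ.v0 := by
  cases ℓ with
  | zero => simp [ρ.P_u11]
  | succ ℓ =>
    rw [ρ.P_Kpow, ρ.P_u11, Nat.succ_sub_one, map_neg, map_smul]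
    push_cast
    module

/-! ### the action of `Q` and `P` on the basis -/

lemma QB00 (k ℓ : ℕ) : ρ.Q (ρ.bas (k,ℓ,false,false))
    = (ℓ:ℂ) • ρ.bas (k,ℓ-1,true,false) + (k:ℂ) • ρ.bas (k-1,ℓ,false,true) := by
  simp only [bas_apply, bfun_ff_ff, bfun_tt_ff, bfun_ff_tt]
  cases k with
  | zero => simp [ρ.QK00 ℓ]
  | succ k =>
    rw [ρ.Q_Gpow, ρ.QK00 ℓ, ρ.XK00 ℓ, map_smul, Nat.succ_sub_one]
    push_cast
    module

lemma QB01 (k ℓ : ℕ) : ρ.Q (ρ.bas (k,ℓ,false,true))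
    = (ℓ:ℂ) • ρ.bas (k,ℓ-1,true,true) - ((k:ℂ) * (m/2)) • ρ.bas (k-1,ℓ,false,false) := by
  simp only [bas_apply, bfun_ff_tt, bfun_tt_tt, bfun_ff_ff]
  cases k with
  | zero => simp [ρ.QK01 ℓ]
  | succ k =>
    rw [ρ.Q_Gpow, ρ.QK01 ℓ, ρ.XK01 ℓ, map_smul, map_neg, map_smul, Nat.succ_sub_one]
    push_cast
    module

lemma QB10 (k ℓ : ℕ) : ρ.Q (ρ.bas (k,ℓ,true,false))
    = (d - ℓ - k) • ρ.bas (k,ℓ,false,false) - (k:ℂ) • ρ.bas (k-1,ℓ,true,true) := by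
  simp only [bas_apply, bfun_tt_ff, bfun_ff_ff, bfun_tt_tt]
  cases k with
  | zero => simp [ρ.QK10 ℓ]
  | succ k =>
    rw [ρ.Q_Gpow, ρ.QK10 ℓ, ρ.XK10 ℓ, map_smul, map_sub, map_neg, Nat.succ_sub_one,
      ← pow_apply_succ ρ.G k ((ρ.K^ℓ) ρ.v0)]
    push_cast
    module

lemma QB11 (k ℓ : ℕ) : ρ.Q (ρ.bas (k,ℓ,true,true))
    = (d - ℓ - k) • ρ.bas (k,ℓ,false,true) + ((k:ℂ) * (m/2)) • ρ.bas (k-1,ℓ,true,false) := by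
  simp only [bas_apply, bfun_tt_tt, bfun_ff_tt, bfun_tt_ff]
  cases k with
  | zero => simp [ρ.QK11 ℓ]
  | succ k =>
    rw [ρ.Q_Gpow, ρ.QK11 ℓ, ρ.XK11 ℓ, map_smul, map_sub, map_smul, Nat.succ_sub_one,
      ← pow_apply_succ ρ.G k ((ρ.K^ℓ) (ρ.Chi ρ.v0))]
    push_cast
    module

lemma PB00 (k ℓ : ℕ) : ρ.P (ρ.bas (k,ℓ,false,false))
    = (ℓ:ℂ) • ρ.bas (k+1,ℓ-1,false,false) + ((k:ℂ) * m) • ρ.bas (k-1,ℓ,false,false) := by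
  simp only [bas_apply, bfun_ff_ff]
  cases k with
  | zero => simp [ρ.PK00 ℓ]
  | succ k =>
    rw [ρ.P_Gpow, ρ.PK00 ℓ, ρ.MK00 ℓ, map_smul, map_smul, Nat.succ_sub_one,
      ← pow_apply_succ ρ.G (k+1) ((ρ.K^(ℓ-1)) ρ.v0)]
    push_cast
    module

lemma PB01 (k ℓ : ℕ) : ρ.P (ρ.bas (k,ℓ,false,true))
    = (ℓ:ℂ) • ρ.bas (k+1,ℓ-1,false,true) + ((k:ℂ) * m) • ρ.bas (k-1,ℓ,false,true) := by
  simp only [bas_apply, bfun_ff_tt]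
  cases k with
  | zero => simp [ρ.PK01 ℓ]
  | succ k =>
    rw [ρ.P_Gpow, ρ.PK01 ℓ, ρ.MK01 ℓ, map_smul, map_smul, Nat.succ_sub_one,
      ← pow_apply_succ ρ.G (k+1) ((ρ.K^(ℓ-1)) (ρ.Chi ρ.v0))]
    push_cast
    module

lemma PB10 (k ℓ : ℕ) : ρ.P (ρ.bas (k,ℓ,true,false))
    = (ℓ:ℂ) • ρ.bas (k+1,ℓ-1,true,false) + ((k:ℂ) * m) • ρ.bas (k-1,ℓ,true,false)
      + ρ.bas (k,ℓ,false,true) := by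
  simp only [bas_apply, bfun_tt_ff, bfun_ff_tt]
  cases k with
  | zero => simp [ρ.PK10 ℓ]
  | succ k =>
    rw [ρ.P_Gpow, ρ.PK10 ℓ, ρ.MK10 ℓ, map_add, map_smul, map_smul, Nat.succ_sub_one,
      ← pow_apply_succ ρ.G (k+1) ((ρ.K^(ℓ-1)) (ρ.S ρ.v0))]
    push_cast
    module

lemma PB11 (k ℓ : ℕ) : ρ.P (ρ.bas (k,ℓ,true,true))
    = (ℓ:ℂ) • ρ.bas (k+1,ℓ-1,true,true) + ((k:ℂ) * m) • ρ.bas (k-1,ℓ,true,true)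
      - (m/2) • ρ.bas (k,ℓ,false,false) := by
  simp only [bas_apply, bfun_tt_tt, bfun_ff_ff]
  cases k with
  | zero => simp [ρ.PK11 ℓ]
  | succ k =>
    rw [ρ.P_Gpow, ρ.PK11 ℓ, ρ.MK11 ℓ, map_sub, map_smul, map_smul, map_smul, Nat.succ_sub_one,
      ← pow_apply_succ ρ.G (k+1) ((ρ.K^(ℓ-1)) (ρ.S (ρ.Chi ρ.v0)))]
    push_cast
    module

end SSch1Verma
namespace SSch1Verma

variable {d m : ℂ} {V : Type*} [AddCommGroup V] [Module ℂ V] (ρ : SSch1Verma d m V)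

/-! ### coordinate formulas -/

lemma coord_formula (T : Module.End ℂ V) (j j1 j2 j3 : Idx) (c1 c2 c3 : ℂ)
    (h : ∀ i : Idx, ρ.bas.repr (T (ρ.bas i)) j =
      c1 * (if i = j1 then 1 else 0) + c2 * (if i = j2 then 1 else 0)
        + c3 * (if i = j3 then 1 else 0))
    (v : V) :
    ρ.bas.repr (T v) j
      = c1 * ρ.bas.repr v j1 + c2 * ρ.bas.repr v j2 + c3 * ρ.bas.repr v j3 := by
  have hmap : (Finsupp.lapply j : (Idx →₀ ℂ) →ₗ[ℂ] ℂ).comp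
        ((ρ.bas.repr : V →ₗ[ℂ] (Idx →₀ ℂ)).comp T)
      = c1 • (Finsupp.lapply j1 : (Idx →₀ ℂ) →ₗ[ℂ] ℂ).comp
          (ρ.bas.repr : V →ₗ[ℂ] (Idx →₀ ℂ))
        + c2 • (Finsupp.lapply j2 : (Idx →₀ ℂ) →ₗ[ℂ] ℂ).comp
            (ρ.bas.repr : V →ₗ[ℂ] (Idx →₀ ℂ))
        + c3 • (Finsupp.lapply j3 : (Idx →₀ ℂ) →ₗ[ℂ] ℂ).comp
            (ρ.bas.repr : V →ₗ[ℂ] (Idx →₀ ℂ)) := by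
    apply ρ.bas.ext
    intro i
    have := h i
    simp only [LinearMap.comp_apply, LinearMap.add_apply, LinearMap.smul_apply,
      Finsupp.lapply_apply, LinearEquiv.coe_coe, smul_eq_mul, Module.Basis.repr_self,
      Finsupp.single_apply]
    simpa [Finsupp.single_apply] using this
  have := DFunLike.congr_fun hmap v
  simpa [smul_eq_mul] using this

lemma Qt00 (k ℓ : ℕ) (v : V) :
    ρ.bas.repr (ρ.Q v) (k,ℓ,false,false)
      = (d - ℓ - k) * ρ.bas.repr v (k,ℓ,true,false) + (-(((k:ℂ)+1) * (m/2))) * ρ.bas.repr v (k+1,ℓ,false,true)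
        + (0) * ρ.bas.repr v (k,ℓ,true,false) := by
  refine ρ.coord_formula ρ.Q (k,ℓ,false,false) (k,ℓ,true,false) (k+1,ℓ,false,true) (k,ℓ,true,false) (d - ℓ - k) (-(((k:ℂ)+1) * (m/2))) (0)
    (fun i => ?_) v
  obtain ⟨ki, ℓi, ai, ci⟩ := i
  cases ai <;> cases ci <;> cases ki <;> cases ℓi <;>
    simp [ρ.QB00, ρ.QB01, ρ.QB10, ρ.QB11, Finsupp.single_apply, Prod.mk.injEq] <;>
    split_ifs <;>
      (try (exfalso; omega)) <;>
      (try (rename_i hcond; obtain ⟨h1, h2⟩ := hcond; try subst h1; try subst h2)) <;>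
      (try (push_cast; ring)) <;> (try simp_all)


lemma Qt01 (k ℓ : ℕ) (v : V) :
    ρ.bas.repr (ρ.Q v) (k,ℓ,false,true)
      = ((k:ℂ)+1) * ρ.bas.repr v (k+1,ℓ,false,false) + (d - ℓ - k) * ρ.bas.repr v (k,ℓ,true,true)
        + (0) * ρ.bas.repr v (k,ℓ,true,true) := by
  refine ρ.coord_formula ρ.Q (k,ℓ,false,true) (k+1,ℓ,false,false) (k,ℓ,true,true) (k,ℓ,true,true) ((k:ℂ)+1) (d - ℓ - k) (0)
    (fun i => ?_) v
  obtain ⟨ki, ℓi, ai, ci⟩ := i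
  cases ai <;> cases ci <;> cases ki <;> cases ℓi <;>
    simp [ρ.QB00, ρ.QB01, ρ.QB10, ρ.QB11, Finsupp.single_apply, Prod.mk.injEq] <;>
    split_ifs <;>
      (try (exfalso; omega)) <;>
      (try (rename_i hcond; obtain ⟨h1, h2⟩ := hcond; try subst h1; try subst h2)) <;>
      (try (push_cast; ring)) <;> (try simp_all)


lemma Qt10 (k ℓ : ℕ) (v : V) :
    ρ.bas.repr (ρ.Q v) (k,ℓ,true,false)
      = ((ℓ:ℂ)+1) * ρ.bas.repr v (k,ℓ+1,false,false) + (((k:ℂ)+1) * (m/2)) * ρ.bas.repr v (k+1,ℓ,true,true)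
        + (0) * ρ.bas.repr v (k+1,ℓ,true,true) := by
  refine ρ.coord_formula ρ.Q (k,ℓ,true,false) (k,ℓ+1,false,false) (k+1,ℓ,true,true) (k+1,ℓ,true,true) ((ℓ:ℂ)+1) (((k:ℂ)+1) * (m/2)) (0)
    (fun i => ?_) v
  obtain ⟨ki, ℓi, ai, ci⟩ := i
  cases ai <;> cases ci <;> cases ki <;> cases ℓi <;>
    simp [ρ.QB00, ρ.QB01, ρ.QB10, ρ.QB11, Finsupp.single_apply, Prod.mk.injEq] <;>
    split_ifs <;>
      (try (exfalso; omega)) <;>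
      (try (rename_i hcond; obtain ⟨h1, h2⟩ := hcond; try subst h1; try subst h2)) <;>
      (try (push_cast; ring)) <;> (try simp_all)


lemma Qt11 (k ℓ : ℕ) (v : V) :
    ρ.bas.repr (ρ.Q v) (k,ℓ,true,true)
      = ((ℓ:ℂ)+1) * ρ.bas.repr v (k,ℓ+1,false,true) + (-((k:ℂ)+1)) * ρ.bas.repr v (k+1,ℓ,true,false)
        + (0) * ρ.bas.repr v (k+1,ℓ,true,false) := by
  refine ρ.coord_formula ρ.Q (k,ℓ,true,true) (k,ℓ+1,false,true) (k+1,ℓ,true,false) (k+1,ℓ,true,false) ((ℓ:ℂ)+1) (-((k:ℂ)+1)) (0)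
    (fun i => ?_) v
  obtain ⟨ki, ℓi, ai, ci⟩ := i
  cases ai <;> cases ci <;> cases ki <;> cases ℓi <;>
    simp [ρ.QB00, ρ.QB01, ρ.QB10, ρ.QB11, Finsupp.single_apply, Prod.mk.injEq] <;>
    split_ifs <;>
      (try (exfalso; omega)) <;>
      (try (rename_i hcond; obtain ⟨h1, h2⟩ := hcond; try subst h1; try subst h2)) <;>
      (try (push_cast; ring)) <;> (try simp_all)


lemma Pt00z (ℓ : ℕ) (v : V) :
    ρ.bas.repr (ρ.P v) (0,ℓ,false,false)
      = (m) * ρ.bas.repr v (1,ℓ,false,false) + (-(m/2)) * ρ.bas.repr v (0,ℓ,true,true)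
        + (0) * ρ.bas.repr v (0,ℓ,true,true) := by
  refine ρ.coord_formula ρ.P (0,ℓ,false,false) (1,ℓ,false,false) (0,ℓ,true,true) (0,ℓ,true,true) (m) (-(m/2)) (0)
    (fun i => ?_) v
  obtain ⟨ki, ℓi, ai, ci⟩ := i
  cases ai <;> cases ci <;> cases ki <;> cases ℓi <;>
    simp [ρ.PB00, ρ.PB01, ρ.PB10, ρ.PB11, Finsupp.single_apply, Prod.mk.injEq] <;>
    split_ifs <;>
      (try (exfalso; omega)) <;>
      (try (rename_i hcond; obtain ⟨h1, h2⟩ := hcond; try subst h1; try subst h2)) <;>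
      (try (push_cast; ring)) <;> (try simp_all)


lemma Pt00s (k ℓ : ℕ) (v : V) :
    ρ.bas.repr (ρ.P v) (k+1,ℓ,false,false)
      = ((ℓ:ℂ)+1) * ρ.bas.repr v (k,ℓ+1,false,false) + (((k:ℂ)+2)*m) * ρ.bas.repr v (k+2,ℓ,false,false)
        + (-(m/2)) * ρ.bas.repr v (k+1,ℓ,true,true) := by
  refine ρ.coord_formula ρ.P (k+1,ℓ,false,false) (k,ℓ+1,false,false) (k+2,ℓ,false,false) (k+1,ℓ,true,true) ((ℓ:ℂ)+1) (((k:ℂ)+2)*m) (-(m/2))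
    (fun i => ?_) v
  obtain ⟨ki, ℓi, ai, ci⟩ := i
  cases ai <;> cases ci <;> cases ki <;> cases ℓi <;>
    simp [ρ.PB00, ρ.PB01, ρ.PB10, ρ.PB11, Finsupp.single_apply, Prod.mk.injEq] <;>
    split_ifs <;>
      (try (exfalso; omega)) <;>
      (try (rename_i hcond; obtain ⟨h1, h2⟩ := hcond; try subst h1; try subst h2)) <;>
      (try (push_cast; ring)) <;> (try simp_all)


lemma Pt01z (ℓ : ℕ) (v : V) :
    ρ.bas.repr (ρ.P v) (0,ℓ,false,true)
      = (m) * ρ.bas.repr v (1,ℓ,false,true) + (1) * ρ.bas.repr v (0,ℓ,true,false)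
        + (0) * ρ.bas.repr v (0,ℓ,true,false) := by
  refine ρ.coord_formula ρ.P (0,ℓ,false,true) (1,ℓ,false,true) (0,ℓ,true,false) (0,ℓ,true,false) (m) (1) (0)
    (fun i => ?_) v
  obtain ⟨ki, ℓi, ai, ci⟩ := i
  cases ai <;> cases ci <;> cases ki <;> cases ℓi <;>
    simp [ρ.PB00, ρ.PB01, ρ.PB10, ρ.PB11, Finsupp.single_apply, Prod.mk.injEq] <;>
    split_ifs <;>
      (try (exfalso; omega)) <;>
      (try (rename_i hcond; obtain ⟨h1, h2⟩ := hcond; try subst h1; try subst h2)) <;>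
      (try (push_cast; ring)) <;> (try simp_all)


lemma Pt01s (k ℓ : ℕ) (v : V) :
    ρ.bas.repr (ρ.P v) (k+1,ℓ,false,true)
      = ((ℓ:ℂ)+1) * ρ.bas.repr v (k,ℓ+1,false,true) + (((k:ℂ)+2)*m) * ρ.bas.repr v (k+2,ℓ,false,true)
        + (1) * ρ.bas.repr v (k+1,ℓ,true,false) := by
  refine ρ.coord_formula ρ.P (k+1,ℓ,false,true) (k,ℓ+1,false,true) (k+2,ℓ,false,true) (k+1,ℓ,true,false) ((ℓ:ℂ)+1) (((k:ℂ)+2)*m) (1)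
    (fun i => ?_) v
  obtain ⟨ki, ℓi, ai, ci⟩ := i
  cases ai <;> cases ci <;> cases ki <;> cases ℓi <;>
    simp [ρ.PB00, ρ.PB01, ρ.PB10, ρ.PB11, Finsupp.single_apply, Prod.mk.injEq] <;>
    split_ifs <;>
      (try (exfalso; omega)) <;>
      (try (rename_i hcond; obtain ⟨h1, h2⟩ := hcond; try subst h1; try subst h2)) <;>
      (try (push_cast; ring)) <;> (try simp_all)


lemma Pt10z (ℓ : ℕ) (v : V) :
    ρ.bas.repr (ρ.P v) (0,ℓ,true,false)
      = (m) * ρ.bas.repr v (1,ℓ,true,false) + (0) * ρ.bas.repr v (1,ℓ,true,false)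
        + (0) * ρ.bas.repr v (1,ℓ,true,false) := by
  refine ρ.coord_formula ρ.P (0,ℓ,true,false) (1,ℓ,true,false) (1,ℓ,true,false) (1,ℓ,true,false) (m) (0) (0)
    (fun i => ?_) v
  obtain ⟨ki, ℓi, ai, ci⟩ := i
  cases ai <;> cases ci <;> cases ki <;> cases ℓi <;>
    simp [ρ.PB00, ρ.PB01, ρ.PB10, ρ.PB11, Finsupp.single_apply, Prod.mk.injEq] <;>
    split_ifs <;>
      (try (exfalso; omega)) <;>
      (try (rename_i hcond; obtain ⟨h1, h2⟩ := hcond; try subst h1; try subst h2)) <;>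
      (try (push_cast; ring)) <;> (try simp_all)


lemma Pt10s (k ℓ : ℕ) (v : V) :
    ρ.bas.repr (ρ.P v) (k+1,ℓ,true,false)
      = ((ℓ:ℂ)+1) * ρ.bas.repr v (k,ℓ+1,true,false) + (((k:ℂ)+2)*m) * ρ.bas.repr v (k+2,ℓ,true,false)
        + (0) * ρ.bas.repr v (k+2,ℓ,true,false) := by
  refine ρ.coord_formula ρ.P (k+1,ℓ,true,false) (k,ℓ+1,true,false) (k+2,ℓ,true,false) (k+2,ℓ,true,false) ((ℓ:ℂ)+1) (((k:ℂ)+2)*m) (0)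
    (fun i => ?_) v
  obtain ⟨ki, ℓi, ai, ci⟩ := i
  cases ai <;> cases ci <;> cases ki <;> cases ℓi <;>
    simp [ρ.PB00, ρ.PB01, ρ.PB10, ρ.PB11, Finsupp.single_apply, Prod.mk.injEq] <;>
    split_ifs <;>
      (try (exfalso; omega)) <;>
      (try (rename_i hcond; obtain ⟨h1, h2⟩ := hcond; try subst h1; try subst h2)) <;>
      (try (push_cast; ring)) <;> (try simp_all)


lemma Pt11z (ℓ : ℕ) (v : V) :
    ρ.bas.repr (ρ.P v) (0,ℓ,true,true)
      = (m) * ρ.bas.repr v (1,ℓ,true,true) + (0) * ρ.bas.repr v (1,ℓ,true,true)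
        + (0) * ρ.bas.repr v (1,ℓ,true,true) := by
  refine ρ.coord_formula ρ.P (0,ℓ,true,true) (1,ℓ,true,true) (1,ℓ,true,true) (1,ℓ,true,true) (m) (0) (0)
    (fun i => ?_) v
  obtain ⟨ki, ℓi, ai, ci⟩ := i
  cases ai <;> cases ci <;> cases ki <;> cases ℓi <;>
    simp [ρ.PB00, ρ.PB01, ρ.PB10, ρ.PB11, Finsupp.single_apply, Prod.mk.injEq] <;>
    split_ifs <;>
      (try (exfalso; omega)) <;>
      (try (rename_i hcond; obtain ⟨h1, h2⟩ := hcond; try subst h1; try subst h2)) <;>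
      (try (push_cast; ring)) <;> (try simp_all)


lemma Pt11s (k ℓ : ℕ) (v : V) :
    ρ.bas.repr (ρ.P v) (k+1,ℓ,true,true)
      = ((ℓ:ℂ)+1) * ρ.bas.repr v (k,ℓ+1,true,true) + (((k:ℂ)+2)*m) * ρ.bas.repr v (k+2,ℓ,true,true)
        + (0) * ρ.bas.repr v (k+2,ℓ,true,true) := by
  refine ρ.coord_formula ρ.P (k+1,ℓ,true,true) (k,ℓ+1,true,true) (k+2,ℓ,true,true) (k+2,ℓ,true,true) ((ℓ:ℂ)+1) (((k:ℂ)+2)*m) (0)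
    (fun i => ?_) v
  obtain ⟨ki, ℓi, ai, ci⟩ := i
  cases ai <;> cases ci <;> cases ki <;> cases ℓi <;>
    simp [ρ.PB00, ρ.PB01, ρ.PB10, ρ.PB11, Finsupp.single_apply, Prod.mk.injEq] <;>
    split_ifs <;>
      (try (exfalso; omega)) <;>
      (try (rename_i hcond; obtain ⟨h1, h2⟩ := hcond; try subst h1; try subst h2)) <;>
      (try (push_cast; ring)) <;> (try simp_all)


end SSch1Verma
namespace SSch1Verma

variable {d m : ℂ} {V : Type*} [AddCommGroup V] [Module ℂ V] (ρ : SSch1Verma d m V)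

lemma cancel {c x : ℂ} (hc : c ≠ 0) (h : c * x = 0) : x = 0 :=
  (mul_eq_zero.mp h).resolve_left hc

lemma hfactor (hd : ∀ p : ℕ, d ≠ (p:ℂ) - 1/2) (p : ℕ) : (d - (p:ℂ) + 1/2) ≠ 0 := by
  intro h
  exact hd p (by linear_combination h)

lemma ker_repr (hm : m ≠ 0) (hd : ∀ p : ℕ, d ≠ (p:ℂ) - 1/2) (v : V)
    (hQ : ρ.Q v = 0) (hP : ρ.P v = 0) :
    ∀ i : Idx, i ≠ (0,0,false,false) → i ≠ (0,0,false,true) → ρ.bas.repr v i = 0 := by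
  have hm2 : (m/2 : ℂ) ≠ 0 := div_ne_zero hm two_ne_zero
  have e1 : ∀ k ℓ : ℕ, 0 = (d - (ℓ:ℂ) - (k:ℂ)) * ρ.bas.repr v (k, ℓ, true, false) - ((k:ℂ)+1)*(m/2) * ρ.bas.repr v (k+1, ℓ, false, true) := by
    intro k ℓ
    have h := ρ.Qt00 k ℓ v
    rw [hQ, map_zero, Finsupp.zero_apply] at h
    linear_combination h
  have e2 : ∀ k ℓ : ℕ, 0 = ((k:ℂ)+1) * ρ.bas.repr v (k+1, ℓ, false, false) + (d - (ℓ:ℂ) - (k:ℂ)) * ρ.bas.repr v (k, ℓ, true, true) := by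
    intro k ℓ
    have h := ρ.Qt01 k ℓ v
    rw [hQ, map_zero, Finsupp.zero_apply] at h
    linear_combination h
  have e3 : ∀ k ℓ : ℕ, 0 = ((ℓ:ℂ)+1) * ρ.bas.repr v (k, ℓ+1, false, false) + ((k:ℂ)+1)*(m/2) * ρ.bas.repr v (k+1, ℓ, true, true) := by
    intro k ℓ
    have h := ρ.Qt10 k ℓ v
    rw [hQ, map_zero, Finsupp.zero_apply] at h
    linear_combination h
  have e4 : ∀ k ℓ : ℕ, 0 = ((ℓ:ℂ)+1) * ρ.bas.repr v (k, ℓ+1, false, true) - ((k:ℂ)+1) * ρ.bas.repr v (k+1, ℓ, true, false) := by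
    intro k ℓ
    have h := ρ.Qt11 k ℓ v
    rw [hQ, map_zero, Finsupp.zero_apply] at h
    linear_combination h
  have p1z : ∀ ℓ : ℕ, 0 = m * ρ.bas.repr v (1, ℓ, false, false) - (m/2) * ρ.bas.repr v (0, ℓ, true, true) := by
    intro ℓ
    have h := ρ.Pt00z ℓ v
    rw [hP, map_zero, Finsupp.zero_apply] at h
    linear_combination h
  have p1s : ∀ k ℓ : ℕ, 0 = ((ℓ:ℂ)+1) * ρ.bas.repr v (k, ℓ+1, false, false) + ((k:ℂ)+2)*m * ρ.bas.repr v (k+2, ℓ, false, false) - (m/2) * ρ.bas.repr v (k+1, ℓ, true, true) := by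
    intro k ℓ
    have h := ρ.Pt00s k ℓ v
    rw [hP, map_zero, Finsupp.zero_apply] at h
    linear_combination h
  have p2z : ∀ ℓ : ℕ, 0 = m * ρ.bas.repr v (1, ℓ, false, true) + ρ.bas.repr v (0, ℓ, true, false) := by
    intro ℓ
    have h := ρ.Pt01z ℓ v
    rw [hP, map_zero, Finsupp.zero_apply] at h
    linear_combination h
  have p2s : ∀ k ℓ : ℕ, 0 = ((ℓ:ℂ)+1) * ρ.bas.repr v (k, ℓ+1, false, true) + ((k:ℂ)+2)*m * ρ.bas.repr v (k+2, ℓ, false, true) + ρ.bas.repr v (k+1, ℓ, true, false) := by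
    intro k ℓ
    have h := ρ.Pt01s k ℓ v
    rw [hP, map_zero, Finsupp.zero_apply] at h
    linear_combination h
  have p3z : ∀ ℓ : ℕ, 0 = m * ρ.bas.repr v (1, ℓ, true, false) := by
    intro ℓ
    have h := ρ.Pt10z ℓ v
    rw [hP, map_zero, Finsupp.zero_apply] at h
    linear_combination h
  have p3s : ∀ k ℓ : ℕ, 0 = ((ℓ:ℂ)+1) * ρ.bas.repr v (k, ℓ+1, true, false) + ((k:ℂ)+2)*m * ρ.bas.repr v (k+2, ℓ, true, false) := by
    intro k ℓ
    have h := ρ.Pt10s k ℓ v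
    rw [hP, map_zero, Finsupp.zero_apply] at h
    linear_combination h
  have p4z : ∀ ℓ : ℕ, 0 = m * ρ.bas.repr v (1, ℓ, true, true) := by
    intro ℓ
    have h := ρ.Pt11z ℓ v
    rw [hP, map_zero, Finsupp.zero_apply] at h
    linear_combination h
  have p4s : ∀ k ℓ : ℕ, 0 = ((ℓ:ℂ)+1) * ρ.bas.repr v (k, ℓ+1, true, true) + ((k:ℂ)+2)*m * ρ.bas.repr v (k+2, ℓ, true, true) := by
    intro k ℓ
    have h := ρ.Pt11s k ℓ v
    rw [hP, map_zero, Finsupp.zero_apply] at h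
    linear_combination h
  -- Step 1: β at odd k vanishes
  have S1 : ∀ j ℓ : ℕ, ∀ c : Bool, ρ.bas.repr v (2*j+1, ℓ, true, c) = 0 := by
    intro j
    induction j with
    | zero =>
      intro ℓ c
      cases c
      · exact SSch1Verma.cancel hm (by linear_combination ((p3z ℓ).symm : _))
      · exact SSch1Verma.cancel hm (by linear_combination ((p4z ℓ).symm : _))
    | succ j ih =>
      intro ℓ c
      rw [show 2*(j+1)+1 = 2*j+1+2 from by omega]
      have hc : ((2*j+3 : ℕ) : ℂ) ≠ 0 := Nat.cast_ne_zero.mpr (by omega)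
      cases c
      · refine SSch1Verma.cancel (mul_ne_zero hc hm) ?_
        have h := p3s (2*j+1) ℓ
        have hih := ih (ℓ+1) false
        push_cast at h ⊢
        linear_combination -h - ((ℓ:ℂ)+1) * hih
      · refine SSch1Verma.cancel (mul_ne_zero hc hm) ?_
        have h := p4s (2*j+1) ℓ
        have hih := ih (ℓ+1) true
        push_cast at h ⊢
        linear_combination -h - ((ℓ:ℂ)+1) * hih
  -- Step 2: α at odd k vanishes
  have S2 : ∀ j ℓ : ℕ, ∀ c : Bool, ρ.bas.repr v (2*j+1, ℓ, false, c) = 0 := by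
    intro j
    induction j with
    | zero =>
      intro ℓ c
      cases c
      · refine SSch1Verma.cancel (c := m * (d - (ℓ:ℂ) + 1/2))
          (mul_ne_zero hm (SSch1Verma.hfactor hd ℓ)) ?_
        have h1 := e2 0 ℓ
        have h2 := p1z ℓ
        push_cast at h1 h2 ⊢
        linear_combination (-(m/2)) * h1 + (-(d - (ℓ:ℂ))) * h2
      · refine SSch1Verma.cancel (c := m * (d - (ℓ:ℂ) + 1/2))
          (mul_ne_zero hm (SSch1Verma.hfactor hd ℓ)) ?_
        have h1 := e1 0 ℓ
        have h2 := p2z ℓ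
        push_cast at h1 h2 ⊢
        linear_combination h1 + (-(d - (ℓ:ℂ))) * h2
    | succ j ih =>
      intro ℓ c
      rw [show 2*(j+1)+1 = 2*j+1+2 from by omega]
      cases c
      · refine SSch1Verma.cancel
          (c := ((2*j+3:ℕ):ℂ) * m * (d - ((ℓ+2*j+2:ℕ):ℂ) + 1/2))
          (mul_ne_zero (mul_ne_zero (Nat.cast_ne_zero.mpr (by omega)) hm)
            (SSch1Verma.hfactor hd (ℓ+2*j+2))) ?_
        have h1 := e2 (2*j+1+1) ℓ
        have h2 := p1s (2*j+1) ℓ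
        have hih := ih (ℓ+1) false
        push_cast at h1 h2 hih ⊢
        linear_combination (-(m/2)) * h1 + (-(d - (ℓ:ℂ) - (2*(j:ℂ)+1) - 1)) * h2
          + (-(d - (ℓ:ℂ) - (2*(j:ℂ)+1) - 1) * ((ℓ:ℂ)+1)) * hih
      · refine SSch1Verma.cancel
          (c := ((2*j+3:ℕ):ℂ) * m * (d - ((ℓ+2*j+2:ℕ):ℂ) + 1/2))
          (mul_ne_zero (mul_ne_zero (Nat.cast_ne_zero.mpr (by omega)) hm)
            (SSch1Verma.hfactor hd (ℓ+2*j+2))) ?_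
        have h1 := e1 (2*j+1+1) ℓ
        have h2 := p2s (2*j+1) ℓ
        have hih := ih (ℓ+1) true
        push_cast at h1 h2 hih ⊢
        linear_combination h1 + (-(d - (ℓ:ℂ) - (2*(j:ℂ)+1) - 1)) * h2
          + (-(d - (ℓ:ℂ) - (2*(j:ℂ)+1) - 1) * ((ℓ:ℂ)+1)) * hih
  -- Step 3: α with ℓ ≥ 1 vanishes
  have S3 : ∀ k ℓ : ℕ, ∀ c : Bool, ρ.bas.repr v (k, ℓ+1, false, c) = 0 := by
    intro k ℓ c
    rcases Nat.even_or_odd k with ⟨j, rfl⟩ | ⟨j, rfl⟩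
    · have hb : ∀ c' : Bool, ρ.bas.repr v (j+j+1, ℓ, true, c') = 0 := by
        intro c'
        rw [show j+j+1 = 2*j+1 from by omega]
        exact S1 j ℓ c'
      cases c
      · refine SSch1Verma.cancel (c := ((ℓ:ℂ)+1)) (Nat.cast_add_one_ne_zero ℓ) ?_
        have h := e3 (j+j) ℓ
        have hb' := hb true
        push_cast at h hb' ⊢
        linear_combination -h - (((j:ℂ)+(j:ℂ)+1)*(m/2)) * hb'
      · refine SSch1Verma.cancel (c := ((ℓ:ℂ)+1)) (Nat.cast_add_one_ne_zero ℓ) ?_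
        have h := e4 (j+j) ℓ
        have hb' := hb false
        push_cast at h hb' ⊢
        linear_combination -h + ((j:ℂ)+(j:ℂ)+1) * hb'
    · exact S2 j (ℓ+1) c
  -- Step 4: all α except at (0,0) vanish
  have S4 : ∀ k ℓ : ℕ, ∀ c : Bool, ((k,ℓ) : ℕ × ℕ) ≠ (0,0) →
      ρ.bas.repr v (k, ℓ, false, c) = 0 := by
    intro k ℓ c hkl
    cases ℓ with
    | succ ℓ => exact S3 k ℓ c
    | zero =>
      match k, hkl with
      | 0, hkl => exact absurd rfl hkl
      | 1, _ => simpa using S2 0 0 c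
      | (k+2), _ =>
        cases c
        · refine SSch1Verma.cancel
            (c := ((k+2:ℕ):ℂ) * m * (d - ((k+1:ℕ):ℂ) + 1/2))
            (mul_ne_zero (mul_ne_zero (Nat.cast_ne_zero.mpr (by omega)) hm)
              (SSch1Verma.hfactor hd (k+1))) ?_
          have h1 := e2 (k+1) 0
          have h2 := p1s k 0
          have hY := S3 k 0 false
          push_cast at h1 h2 hY ⊢
          linear_combination (-(m/2)) * h1 + (-(d - (k:ℂ) - 1)) * h2
            + (-(d - (k:ℂ) - 1)) * hY
        · refine SSch1Verma.cancel
            (c := ((k+2:ℕ):ℂ) * m * (d - ((k+1:ℕ):ℂ) + 1/2))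
            (mul_ne_zero (mul_ne_zero (Nat.cast_ne_zero.mpr (by omega)) hm)
              (SSch1Verma.hfactor hd (k+1))) ?_
          have h1 := e1 (k+1) 0
          have h2 := p2s k 0
          have hY := S3 k 0 true
          push_cast at h1 h2 hY ⊢
          linear_combination h1 + (-(d - (k:ℂ) - 1)) * h2 + (-(d - (k:ℂ) - 1)) * hY
  -- Step 5: all β vanish
  have S5 : ∀ k ℓ : ℕ, ∀ c : Bool, ρ.bas.repr v (k, ℓ, true, c) = 0 := by
    intro k ℓ c
    cases c
    · cases k with
      | zero =>
        have h := p2z ℓ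
        have hα := S4 1 ℓ true (by simp)
        linear_combination -h - m * hα
      | succ k =>
        have h := p2s k ℓ
        have hα1 := S3 k ℓ true
        have hα2 := S4 (k+2) ℓ true (by simp)
        push_cast at h hα1 hα2 ⊢
        linear_combination -h - ((ℓ:ℂ)+1) * hα1 - (((k:ℂ)+2)*m) * hα2
    · cases k with
      | zero =>
        refine SSch1Verma.cancel (c := (m/2)) hm2 ?_
        have h := p1z ℓ
        have hα := S4 1 ℓ false (by simp)
        linear_combination h + m * hα
      | succ k =>
        refine SSch1Verma.cancel (c := (m/2)) hm2 ?_
        have h := p1s k ℓ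
        have hα1 := S3 k ℓ false
        have hα2 := S4 (k+2) ℓ false (by simp)
        push_cast at h hα1 hα2 ⊢
        linear_combination h + ((ℓ:ℂ)+1) * hα1 + (((k:ℂ)+2)*m) * hα2
  -- conclusion
  intro i h0 h1
  obtain ⟨k,ℓ,a,c⟩ := i
  cases a
  · refine S4 k ℓ c (fun hkl => ?_)
    rw [Prod.mk.injEq] at hkl
    obtain ⟨rfl, rfl⟩ := hkl
    cases c
    · exact h0 rfl
    · exact h1 rfl
  · exact S5 k ℓ c

end SSch1Verma
namespace SSch1Verma

variable {d m : ℂ} {V : Type*} [AddCommGroup V] [Module ℂ V] (ρ : SSch1Verma d m V)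

/-- degree of a basis index -/
def degIdx (i : Idx) : ℕ := i.1 + 2 * i.2.1 + i.2.2.1.toNat

lemma deg_Q (v : V) (n : ℕ) (hv : ∀ i : Idx, n + 1 ≤ degIdx i → ρ.bas.repr v i = 0) :
    ∀ j : Idx, n + 1 ≤ degIdx j + 1 → ρ.bas.repr (ρ.Q v) j = 0 := by
  rintro ⟨k, ℓ, a, c⟩ hj
  cases a <;> cases c
  · rw [ρ.Qt00 k ℓ v, hv _ (by simp [degIdx] at hj ⊢; omega), hv _ (by simp [degIdx] at hj ⊢; omega)]
    ring
  · rw [ρ.Qt01 k ℓ v, hv _ (by simp [degIdx] at hj ⊢; omega),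
      hv _ (by simp [degIdx] at hj ⊢; omega)]
    ring
  · rw [ρ.Qt10 k ℓ v, hv _ (by simp [degIdx] at hj ⊢; omega),
      hv _ (by simp [degIdx] at hj ⊢; omega)]
    ring
  · rw [ρ.Qt11 k ℓ v, hv _ (by simp [degIdx] at hj ⊢; omega),
      hv _ (by simp [degIdx] at hj ⊢; omega)]
    ring

lemma deg_P (v : V) (n : ℕ) (hv : ∀ i : Idx, n + 1 ≤ degIdx i → ρ.bas.repr v i = 0) :
    ∀ j : Idx, n + 1 ≤ degIdx j + 1 → ρ.bas.repr (ρ.P v) j = 0 := by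
  rintro ⟨k, ℓ, a, c⟩ hj
  cases a <;> cases c <;> cases k
  · rw [ρ.Pt00z ℓ v, hv _ (by simp [degIdx] at hj ⊢; omega),
      hv _ (by simp [degIdx] at hj ⊢; omega)]
    ring
  · rw [ρ.Pt00s _ ℓ v, hv _ (by simp [degIdx] at hj ⊢; omega),
      hv _ (by simp [degIdx] at hj ⊢; omega), hv _ (by simp [degIdx] at hj ⊢; omega)]
    ring
  · rw [ρ.Pt01z ℓ v, hv _ (by simp [degIdx] at hj ⊢; omega),
      hv _ (by simp [degIdx] at hj ⊢; omega)]
    ring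
  · rw [ρ.Pt01s _ ℓ v, hv _ (by simp [degIdx] at hj ⊢; omega),
      hv _ (by simp [degIdx] at hj ⊢; omega), hv _ (by simp [degIdx] at hj ⊢; omega)]
    ring
  · rw [ρ.Pt10z ℓ v, hv _ (by simp [degIdx] at hj ⊢; omega)]
    ring
  · rw [ρ.Pt10s _ ℓ v, hv _ (by simp [degIdx] at hj ⊢; omega),
      hv _ (by simp [degIdx] at hj ⊢; omega)]
    ring
  · rw [ρ.Pt11z ℓ v, hv _ (by simp [degIdx] at hj ⊢; omega)]
    ring
  · rw [ρ.Pt11s _ ℓ v, hv _ (by simp [degIdx] at hj ⊢; omega),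
      hv _ (by simp [degIdx] at hj ⊢; omega)]
    ring

/-! ### invariant subspace helpers -/

lemma inv_P {W : Submodule ℂ V} (hW : ρ.Invariant W) {w : V} (hw : w ∈ W) :
    ρ.P w ∈ W := (hW w hw).2.1
lemma inv_G {W : Submodule ℂ V} (hW : ρ.Invariant W) {w : V} (hw : w ∈ W) :
    ρ.G w ∈ W := (hW w hw).2.2.1
lemma inv_K {W : Submodule ℂ V} (hW : ρ.Invariant W) {w : V} (hw : w ∈ W) :
    ρ.K w ∈ W := (hW w hw).2.2.2.2.1
lemma inv_Q {W : Submodule ℂ V} (hW : ρ.Invariant W) {w : V} (hw : w ∈ W) :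
    ρ.Q w ∈ W := (hW w hw).2.2.2.2.2.2.1
lemma inv_S {W : Submodule ℂ V} (hW : ρ.Invariant W) {w : V} (hw : w ∈ W) :
    ρ.S w ∈ W := (hW w hw).2.2.2.2.2.2.2.1
lemma inv_Chi {W : Submodule ℂ V} (hW : ρ.Invariant W) {w : V} (hw : w ∈ W) :
    ρ.Chi w ∈ W := (hW w hw).2.2.2.2.2.2.2.2.2

lemma bas00 : ρ.bas (0,0,false,false) = ρ.v0 := by
  rw [bas_apply, ρ.bfun_ff_ff]; simp

lemma bas01 : ρ.bas (0,0,false,true) = ρ.Chi ρ.v0 := by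
  rw [bas_apply, ρ.bfun_ff_tt]; simp

/-- the base case: a nonzero element of `W` supported on the two degree-zero basis
vectors forces `v₀ ∈ W` -/
lemma pair_mem (hm : m ≠ 0) {W : Submodule ℂ V} (hW : ρ.Invariant W) (w : V)
    (hwW : w ∈ W) (hw0 : w ≠ 0)
    (hsupp : ∀ i : Idx, i ≠ (0,0,false,false) → i ≠ (0,0,false,true) →
      ρ.bas.repr w i = 0) : ρ.v0 ∈ W := by
  set a := ρ.bas.repr w (0,0,false,false) with ha
  set b := ρ.bas.repr w (0,0,false,true) with hb
  have hrepr : ρ.bas.repr w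
      = Finsupp.single (0,0,false,false) a + Finsupp.single (0,0,false,true) b := by
    ext j
    by_cases hj0 : j = ((0,0,false,false) : Idx)
    · subst hj0; simp [ha]
    · by_cases hj1 : j = ((0,0,false,true) : Idx)
      · subst hj1; simp [hb]
      · rw [hsupp j hj0 hj1]
        simp [Finsupp.single_apply, Ne.symm hj0, Ne.symm hj1]
  have hw : w = a • ρ.v0 + b • ρ.Chi ρ.v0 := by
    have := congrArg ρ.bas.repr.symm hrepr
    rw [LinearEquiv.symm_apply_apply, map_add, Module.Basis.repr_symm_single,
      Module.Basis.repr_symm_single, ρ.bas00, ρ.bas01] at this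
    exact this
  have hChiw : ρ.Chi w ∈ W := ρ.inv_Chi hW hwW
  have hQGw : ρ.Q (ρ.G w) ∈ W := ρ.inv_Q hW (ρ.inv_G hW hwW)
  by_cases hbz : b = 0
  · have haz : a ≠ 0 := by
      intro haz
      exact hw0 (by rw [hw, hbz, haz, zero_smul, zero_smul, add_zero])
    have : ρ.v0 = a⁻¹ • w := by
      rw [hw, hbz, zero_smul, add_zero, smul_smul, inv_mul_cancel₀ haz, one_smul]
    rw [this]
    exact W.smul_mem _ hwW
  · have key : (b * m) • ρ.v0 = ρ.Chi w - ρ.Q (ρ.G w) := by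
      rw [hw]
      rw [map_add, map_smul, map_smul, ρ.opChiChi, map_add, map_smul, map_smul,
        map_add, map_smul, map_smul, ρ.opQG ρ.v0, ρ.opQG (ρ.Chi ρ.v0), ρ.lw_Q,
        ρ.Q_u01, ρ.lw_X, ρ.X_u01]
      simp only [map_zero]
      module
    have : ρ.v0 = (b * m)⁻¹ • (ρ.Chi w - ρ.Q (ρ.G w)) := by
      rw [← key, smul_smul, inv_mul_cancel₀ (mul_ne_zero hbz hm), one_smul]
    rw [this]
    exact W.smul_mem _ (W.sub_mem hChiw hQGw)

/-- descent: any nonzero element of an invariant subspace yields `v₀` -/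
lemma reach (hm : m ≠ 0) (hd : ∀ p : ℕ, d ≠ (p:ℂ) - 1/2) {W : Submodule ℂ V}
    (hW : ρ.Invariant W) :
    ∀ n : ℕ, ∀ w : V, w ∈ W → w ≠ 0 →
      (∀ i : Idx, n + 1 ≤ degIdx i → ρ.bas.repr w i = 0) → ρ.v0 ∈ W := by
  intro n
  induction n with
  | zero =>
    intro w hwW hw0 hsupp
    refine ρ.pair_mem hm hW w hwW hw0 (fun i hi0 hi1 => hsupp i ?_)
    obtain ⟨k, ℓ, a, c⟩ := i
    cases a
    · have hne : ¬(k = 0 ∧ ℓ = 0) := by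
        cases c
        · simpa [Prod.ext_iff] using hi0
        · simpa [Prod.ext_iff] using hi1
      simp [degIdx]
      omega
    · simp [degIdx]
  | succ n ih =>
    intro w hwW hw0 hsupp
    by_cases hQ : ρ.Q w = 0
    · by_cases hP : ρ.P w = 0
      · exact ρ.pair_mem hm hW w hwW hw0 (ρ.ker_repr hm hd w hQ hP)
      · exact ih (ρ.P w) (ρ.inv_P hW hwW) hP
          (fun j hj => ρ.deg_P w (n+1) hsupp j (by omega))
    · exact ih (ρ.Q w) (ρ.inv_Q hW hwW) hQ
        (fun j hj => ρ.deg_Q w (n+1) hsupp j (by omega))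

/-- an invariant subspace containing `v₀` is everything -/
lemma gen_top {W : Submodule ℂ V} (hW : ρ.Invariant W) (hv0 : ρ.v0 ∈ W) : W = ⊤ := by
  have hbf : ∀ i : Idx, ρ.bfun i ∈ W := by
    have hu : ∀ a c : Bool,
        ((if a then ρ.S else 1) ((if c then ρ.Chi else 1) ρ.v0)) ∈ W := by
      intro a c
      cases a <;> cases c <;>
        simp only [Bool.false_eq_true, if_true, if_false, Module.End.one_apply, ite_true,
          ite_false, reduceIte] <;>
        first
          | exact hv0
          | exact ρ.inv_Chi hW hv0
          | exact ρ.inv_S hW hv0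
          | exact ρ.inv_S hW (ρ.inv_Chi hW hv0)
    have hK : ∀ ℓ : ℕ, ∀ x ∈ W, (ρ.K ^ ℓ) x ∈ W := by
      intro ℓ
      induction ℓ with
      | zero => intro x hx; simpa using hx
      | succ ℓ ih =>
        intro x hx
        rw [pow_apply_succ]
        exact ih _ (ρ.inv_K hW hx)
    have hG : ∀ k : ℕ, ∀ x ∈ W, (ρ.G ^ k) x ∈ W := by
      intro k
      induction k with
      | zero => intro x hx; simpa using hx
      | succ k ih =>
        intro x hx
        rw [pow_apply_succ]
        exact ih _ (ρ.inv_G hW hx)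
    rintro ⟨k, ℓ, a, c⟩
    have : ρ.bfun (k, ℓ, a, c)
        = (ρ.G ^ k) ((ρ.K ^ ℓ) ((if a then ρ.S else 1) ((if c then ρ.Chi else 1) ρ.v0))) := by
      cases a <;> cases c <;>
        simp [bfun_ff_ff, bfun_ff_tt, bfun_tt_ff, bfun_tt_tt]
    rw [this]
    exact hG k _ (hK ℓ _ (hu a c))
  rw [eq_top_iff, ← ρ.pbw_span]
  refine Submodule.span_le.mpr ?_
  rintro x ⟨i, rfl⟩
  exact hbf i

end SSch1Verma

/-- For `m ≠ 0`, if `d ≠ p - 1/2` for every `p ∈ ℤ≥0`, then the Verma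
module `V^d` over 𝔰(1/1) is irreducible. -/
theorem statement6 {d m : ℂ} {V : Type*} [AddCommGroup V] [Module ℂ V]
    (ρ : SSch1Verma d m V) (hm : m ≠ 0) (hd : ∀ p : ℕ, d ≠ (p : ℂ) - 1/2) :
    ∀ W : Submodule ℂ V, ρ.Invariant W → W = ⊥ ∨ W = ⊤ := by
  intro W hW
  by_cases hbot : W = ⊥
  · exact Or.inl hbot
  · right
    obtain ⟨w, hwW, hw0⟩ := (Submodule.ne_bot_iff W).mp hbot
    have hb : ∀ i : SSch1Verma.Idx,
        ((ρ.bas.repr w).support.sup SSch1Verma.degIdx) + 1 ≤ SSch1Verma.degIdx i →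
        ρ.bas.repr w i = 0 := by
      intro i hi
      by_contra hne
      have hmem : i ∈ (ρ.bas.repr w).support := Finsupp.mem_support_iff.mpr hne
      have := Finset.le_sup (f := SSch1Verma.degIdx) hmem
      omega
    exact ρ.gen_top hW (ρ.reach hm hd hW _ w hwW hw0 hb)
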